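/- Let H_space have orthonormal vectors L, R and H_spin = ℂ². The linear map sending (L⊗s)∧(R⊗t) ↦ s⊗t (for s, t ∈ H_spin), restricted to the 4-dimensional subspace of antisymmetric vectors spanned by {(L⊗s)∧(R⊗t) : s, t ∈ {↑, ↓}}, is a well-defined unitary isomorphism onto ℂ²⊗ℂ², and it sends the fermionic EPRB state (1/√2)((L,↑)∧(R,↓) − (L,↓)∧(R,↑)) to the singlet state (1/√2)(↑⊗↓ − ↓⊗↑). -/

import Mathlib

open scoped ComplexInnerProductSpace

noncomputable section

/-- Tensor product of a spatial vector and a spin vector. -/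
def tensSS {m : ℕ} (x : EuclideanSpace ℂ (Fin m)) (y : EuclideanSpace ℂ (Fin 2)) :
    EuclideanSpace ℂ (Fin m × Fin 2) :=
  (WithLp.equiv 2 _).symm fun p => x p.1 * y p.2

/-- Tensor product of two single-particle vectors. -/
def tensBig {m : ℕ} (x y : EuclideanSpace ℂ (Fin m × Fin 2)) :
    EuclideanSpace ℂ ((Fin m × Fin 2) × (Fin m × Fin 2)) :=
  (WithLp.equiv 2 _).symm fun p => x p.1 * y p.2

/-- The wedge `u ∧ v := (u⊗v − v⊗u)/√2` of two single-particle vectors. -/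
def wedgeBig {m : ℕ} (x y : EuclideanSpace ℂ (Fin m × Fin 2)) :
    EuclideanSpace ℂ ((Fin m × Fin 2) × (Fin m × Fin 2)) :=
  (Real.sqrt 2 : ℂ)⁻¹ • (tensBig x y - tensBig y x)

/-- Tensor product of two spin vectors, an element of `ℂ² ⊗ ℂ²`. -/
def tensSpin (x y : EuclideanSpace ℂ (Fin 2)) : EuclideanSpace ℂ (Fin 2 × Fin 2) :=
  (WithLp.equiv 2 _).symm fun p => x p.1 * y p.2

lemma inner_tensBig {m : ℕ} (a b c d : EuclideanSpace ℂ (Fin m × Fin 2)) :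
    ⟪tensBig a b, tensBig c d⟫ = ⟪a, c⟫ * ⟪b, d⟫ := by
  simp only [tensBig, PiLp.inner_apply, RCLike.inner_apply, WithLp.equiv_symm_apply, WithLp.ofLp_toLp,
    map_mul, Finset.sum_mul_sum]
  rw [Fintype.sum_prod_type]
  refine Finset.sum_congr rfl fun p _ => Finset.sum_congr rfl fun q _ => ?_
  ring

lemma inner_tensSS {m : ℕ} (a c : EuclideanSpace ℂ (Fin m)) (b d : EuclideanSpace ℂ (Fin 2)) :
    ⟪tensSS a b, tensSS c d⟫ = ⟪a, c⟫ * ⟪b, d⟫ := by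
  simp only [tensSS, PiLp.inner_apply, RCLike.inner_apply, WithLp.equiv_symm_apply, WithLp.ofLp_toLp,
    map_mul, Finset.sum_mul_sum]
  rw [Fintype.sum_prod_type]
  refine Finset.sum_congr rfl fun p _ => Finset.sum_congr rfl fun q _ => ?_
  ring

lemma inner_wedgeBig {m : ℕ} (a b c d : EuclideanSpace ℂ (Fin m × Fin 2)) :
    ⟪wedgeBig a b, wedgeBig c d⟫ =
      (2 : ℂ)⁻¹ * (⟪a, c⟫ * ⟪b, d⟫ - ⟪a, d⟫ * ⟪b, c⟫ - ⟪b, c⟫ * ⟪a, d⟫ + ⟪b, d⟫ * ⟪a, c⟫) := by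
  have h2 : (starRingEnd ℂ) ((Real.sqrt 2 : ℂ)⁻¹) * (Real.sqrt 2 : ℂ)⁻¹ = (2 : ℂ)⁻¹ := by
    rw [map_inv₀, Complex.conj_ofReal, ← mul_inv, ← Complex.ofReal_mul,
      Real.mul_self_sqrt (by norm_num)]; norm_num
  simp only [wedgeBig, inner_smul_left, inner_smul_right, inner_sub_left, inner_sub_right,
    inner_tensBig]
  rw [mul_comm ((starRingEnd ℂ) ((Real.sqrt 2 : ℂ)⁻¹)) ((Real.sqrt 2 : ℂ)⁻¹)] at h2
  rw [show ∀ x y : ℂ, (Real.sqrt 2 : ℂ)⁻¹ * ((starRingEnd ℂ) ((Real.sqrt 2 : ℂ)⁻¹) * x -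
      (starRingEnd ℂ) ((Real.sqrt 2 : ℂ)⁻¹) * y) =
      ((Real.sqrt 2 : ℂ)⁻¹ * (starRingEnd ℂ) ((Real.sqrt 2 : ℂ)⁻¹)) * (x - y)
    from fun x y => by ring, h2]
  ring

lemma inner_s (i j : Fin 2) :
    ⟪(EuclideanSpace.single i 1 : EuclideanSpace ℂ (Fin 2)),
      (EuclideanSpace.single j 1 : EuclideanSpace ℂ (Fin 2))⟫ =
      if i = j then (1 : ℂ) else 0 := by
  simp [EuclideanSpace.inner_single_left, EuclideanSpace.single_apply, eq_comm]

lemma tensSpin_single (i j : Fin 2) :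
    tensSpin (EuclideanSpace.single i 1) (EuclideanSpace.single j 1)
      = EuclideanSpace.single ((i, j) : Fin 2 × Fin 2) (1 : ℂ) := by
  ext p
  simp only [tensSpin, WithLp.equiv_symm_apply, WithLp.ofLp_toLp, EuclideanSpace.single_apply, Prod.ext_iff]
  obtain ⟨p1, p2⟩ := p
  by_cases h1 : p1 = i <;> by_cases h2 : p2 = j <;> simp [h1, h2]


set_option maxHeartbeats 1000000 in
/-- The linear map `(L⊗s)∧(R⊗t) ↦ s⊗t`, restricted to the 4-dimensional subspace
spanned by `{(L⊗s)∧(R⊗t) : s, t ∈ {↑, ↓}}`, is a well-defined unitary isomorphism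
onto `ℂ²⊗ℂ²`, and it sends the fermionic EPRB state
`(1/√2)((L,↑)∧(R,↓) − (L,↓)∧(R,↑))` to the singlet `(1/√2)(↑⊗↓ − ↓⊗↑)`. -/
theorem fermionic_EPRB_unitarily_equivalent_to_singlet (m : ℕ)
    (L R : EuclideanSpace ℂ (Fin m))
    (hL : ⟪L, L⟫ = 1) (hR : ⟪R, R⟫ = 1) (hLR : ⟪L, R⟫ = 0) :
    let s : Fin 2 → EuclideanSpace ℂ (Fin 2) := fun i => EuclideanSpace.single i 1
    let W : Submodule ℂ (EuclideanSpace ℂ ((Fin m × Fin 2) × (Fin m × Fin 2))) :=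
      Submodule.span ℂ
        (Set.range fun p : Fin 2 × Fin 2 => wedgeBig (tensSS L (s p.1)) (tensSS R (s p.2)))
    Module.finrank ℂ W = 4 ∧
    ∃ T : W ≃ₗᵢ[ℂ] EuclideanSpace ℂ (Fin 2 × Fin 2),
      (∀ (i j : Fin 2) (x : W),
        (x : EuclideanSpace ℂ ((Fin m × Fin 2) × (Fin m × Fin 2)))
            = wedgeBig (tensSS L (s i)) (tensSS R (s j)) →
          T x = tensSpin (s i) (s j)) ∧
      (∀ x : W,
        (x : EuclideanSpace ℂ ((Fin m × Fin 2) × (Fin m × Fin 2)))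
            = (Real.sqrt 2 : ℂ)⁻¹ •
              (wedgeBig (tensSS L (s 0)) (tensSS R (s 1))
                - wedgeBig (tensSS L (s 1)) (tensSS R (s 0))) →
          T x = (Real.sqrt 2 : ℂ)⁻¹ • (tensSpin (s 0) (s 1) - tensSpin (s 1) (s 0))) := by
  intro s W
  letI : InnerProductSpace ℂ W := inferInstance
  set w : Fin 2 × Fin 2 → EuclideanSpace ℂ ((Fin m × Fin 2) × (Fin m × Fin 2)) :=
    fun p => wedgeBig (tensSS L (s p.1)) (tensSS R (s p.2)) with hw_def
  have hRL : ⟪R, L⟫ = 0 := by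
    rw [← inner_conj_symm, hLR, map_zero]
  have hs : ∀ i j : Fin 2, ⟪s i, s j⟫ = if i = j then (1 : ℂ) else 0 := fun i j => inner_s i j
  have hinner : ∀ p q : Fin 2 × Fin 2, ⟪w p, w q⟫ = if p = q then 1 else 0 := by
    intro p q
    rw [hw_def]
    simp only [inner_wedgeBig, inner_tensSS, hL, hR, hLR, hRL, hs, zero_mul, mul_zero]
    by_cases h1 : p.1 = q.1 <;> by_cases h2 : p.2 = q.2 <;>
      simp [h1, h2, Prod.ext_iff] <;> norm_num
  have horth : Orthonormal ℂ w := orthonormal_iff_ite.mpr hinner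
  have hli : LinearIndependent ℂ w := horth.linearIndependent
  have hrank : Module.finrank ℂ W = 4 := by
    rw [show W = Submodule.span ℂ (Set.range w) from rfl, finrank_span_eq_card hli]
    simp
  refine ⟨hrank, ?_⟩
  -- the family inside W
  have hmem : ∀ p, w p ∈ W := fun p => Submodule.subset_span ⟨p, rfl⟩
  set wW : Fin 2 × Fin 2 → W := fun p => ⟨w p, hmem p⟩ with hwW_def
  have horthW : Orthonormal ℂ wW := by
    rw [orthonormal_iff_ite]
    intro p q
    rw [Submodule.coe_inner]
    exact hinner p q
  have hliW : LinearIndependent ℂ wW := horthW.linearIndependent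
  have hcard : Fintype.card (Fin 2 × Fin 2) = Module.finrank ℂ W := by
    rw [hrank]; simp
  let b : Module.Basis (Fin 2 × Fin 2) ℂ W := basisOfLinearIndependentOfCardEqFinrank hliW hcard
  have hb : ⇑b = wW := coe_basisOfLinearIndependentOfCardEqFinrank hliW hcard
  have hbo : Orthonormal ℂ b := by rw [show ⇑b = wW from hb]; exact horthW
  let B : OrthonormalBasis (Fin 2 × Fin 2) ℂ W := b.toOrthonormalBasis hbo
  have hB : ∀ p, B p = wW p := by
    intro p
    have : ⇑B = ⇑b := b.coe_toOrthonormalBasis hbo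
    rw [show B p = b p from congrFun this p, hb]
  refine ⟨B.repr, ?_, ?_⟩
  · intro i j x hx
    have hx' : x = wW (i, j) := Subtype.ext hx
    rw [hx', ← hB, B.repr_self, tensSpin_single]
  · intro x hx
    have hx' : x = (Real.sqrt 2 : ℂ)⁻¹ • (wW (0, 1) - wW (1, 0)) := by
      apply Subtype.ext
      push_cast
      exact hx
    rw [hx', map_smul, map_sub, ← hB, ← hB, B.repr_self, B.repr_self,
      tensSpin_single, tensSpin_single]

end
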